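/- arXiv:math/0607730 — 3 statements merged into one kernel-verified Lean document; each statement's English description precedes it below -/
import Mathlib

section
/- Let φ be an Orlicz function. The following conditions are equivalent: (1) the Cesàro–Orlicz sequence space ces_φ contains a nonzero element; (2) there exists n₁ ∈ ℕ such that ∑_{n=n₁}^∞ φ(1/n) < ∞; (3) for every k > 0 there exists n_k ∈ ℕ such that ∑_{n=n_k}^∞ φ(k/n) < ∞. -/
open scoped ENNReal
open Filter

/-- An Orlicz function: `φ : ℝ → [0,∞]` even, convex, left continuous on `ℝ₊`,
continuous at zero, with `φ 0 = 0` and `φ u → ∞` as `u → ∞`. -/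
structure OrliczFunction where
  toFun : ℝ → ℝ≥0∞
  even' : ∀ u : ℝ, toFun (-u) = toFun u
  convex' : ∀ u v t : ℝ, 0 ≤ t → t ≤ 1 →
    toFun (t * u + (1 - t) * v) ≤ ENNReal.ofReal t * toFun u + ENNReal.ofReal (1 - t) * toFun v
  map_zero' : toFun 0 = 0
  leftContinuous' : ∀ t : ℝ, 0 < t → Tendsto toFun (nhdsWithin t (Set.Iio t)) (nhds (toFun t))
  continuousAtZero' : Tendsto toFun (nhds 0) (nhds 0)
  tendsto_top' : Tendsto toFun atTop (nhds ⊤)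

/-- The Cesàro mean `σx(n) = (1/n) ∑_{j=1}^n |x j|` (with `0`-based indexing). -/
noncomputable def cesaroMean (x : ℕ → ℝ) (n : ℕ) : ℝ :=
  (∑ j ∈ Finset.range (n + 1), |x j|) / (n + 1)

/-- The modular `ρ_φ(x) = ∑_i φ(σx(i))`. -/
noncomputable def rho (φ : OrliczFunction) (x : ℕ → ℝ) : ℝ≥0∞ :=
  ∑' n : ℕ, φ.toFun (cesaroMean x n)

/-- The Cesàro–Orlicz sequence space `ces_φ`. -/
def cesOrlicz (φ : OrliczFunction) : Set (ℕ → ℝ) :=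
  {x | ∃ lam : ℝ, 0 < lam ∧ rho φ (fun i => lam * x i) < ⊤}

/-- The Luxemburg norm `‖x‖_φ = inf {λ > 0 : ρ_φ(x/λ) ≤ 1}`. -/
noncomputable def luxNorm (φ : OrliczFunction) (x : ℕ → ℝ) : ℝ :=
  sInf {lam : ℝ | 0 < lam ∧ rho φ (fun i => x i / lam) ≤ 1}

/-- The subspace `A_φ` of `ces_φ`. -/
def Aphi (φ : OrliczFunction) : Set (ℕ → ℝ) :=
  {x | x ∈ cesOrlicz φ ∧ ∀ k : ℝ, 0 < k → ∃ nk : ℕ,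
    ∑' n : ℕ, φ.toFun ((k / ((nk + n + 1 : ℕ) : ℝ)) * ∑ i ∈ Finset.range (nk + n + 1), |x i|) < ⊤}

/-- `∃ n₁, ∑_{n=n₁}^∞ φ(1/n) < ∞`. -/
def TailFinite (φ : OrliczFunction) : Prop :=
  ∃ n₁ : ℕ, ∑' n : ℕ, φ.toFun (((n₁ + n + 1 : ℕ) : ℝ)⁻¹) < ⊤

/-- The `Δ₂`-condition at zero. -/
def Delta2Zero (φ : OrliczFunction) : Prop :=
  ∃ K : ℝ, 0 < K ∧ ∃ a : ℝ, 0 < a ∧ 0 < φ.toFun a ∧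
    ∀ u : ℝ, 0 ≤ u → u ≤ a → φ.toFun (2 * u) ≤ ENNReal.ofReal K * φ.toFun u

/-- `φ` takes only finite values. -/
def FiniteValued (φ : OrliczFunction) : Prop := ∀ u : ℝ, φ.toFun u ≠ ⊤

/-- monotone on nonneg reals -/
lemma OrliczFunction.mono (φ : OrliczFunction) {u v : ℝ} (hu : 0 ≤ u) (huv : u ≤ v) :
    φ.toFun u ≤ φ.toFun v := by
  rcases eq_or_lt_of_le (hu.trans huv) with h | hv
  · have hu0 : u = 0 := le_antisymm (huv.trans h.symm.le) hu
    have hv0 : v = 0 := h.symm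
    simp [hu0, hv0]
  · have ht0 : 0 ≤ u / v := div_nonneg hu hv.le
    have ht1 : u / v ≤ 1 := div_le_one_of_le₀ huv hv.le
    have h := φ.convex' v 0 (u / v) ht0 ht1
    rw [mul_zero, add_zero, div_mul_cancel₀ _ hv.ne', φ.map_zero', mul_zero, add_zero] at h
    calc φ.toFun u ≤ ENNReal.ofReal (u / v) * φ.toFun v := h
      _ ≤ 1 * φ.toFun v := by
          gcongr
          exact ENNReal.ofReal_le_one.2 ht1
      _ = φ.toFun v := one_mul _

lemma tsum_div_le (K : ℕ) (hK : K ≠ 0) (g : ℕ → ℝ≥0∞) :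
    ∑' n : ℕ, g (n / K) ≤ K * ∑' n, g n := by
  haveI : NeZero K := ⟨hK⟩
  have e := (Nat.divModEquiv K).symm
  have h1 : ∑' n : ℕ, g (n / K) = ∑' p : ℕ × Fin K, g (((Nat.divModEquiv K).symm p) / K) :=
    ((Nat.divModEquiv K).symm.tsum_eq fun n => g (n / K)).symm
  have h2 : ∀ p : ℕ × Fin K, ((Nat.divModEquiv K).symm p : ℕ) / K = p.1 := by
    rintro ⟨q, r⟩
    show (q * K + (r : ℕ)) / K = q
    rw [mul_comm, Nat.mul_add_div (Nat.pos_of_ne_zero hK), Nat.div_eq_of_lt r.2, add_zero]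
  rw [h1]
  calc ∑' p : ℕ × Fin K, g (((Nat.divModEquiv K).symm p) / K)
      = ∑' p : ℕ × Fin K, g p.1 := by exact tsum_congr fun p => by rw [h2]
    _ = ∑' (q : ℕ) (_ : Fin K), g q := ENNReal.tsum_prod (f := fun a (_ : Fin K) => g a)
    _ = ∑' q : ℕ, (K : ℝ≥0∞) * g q := by
        refine tsum_congr fun q => ?_
        rw [tsum_fintype]
        simp [Finset.sum_const, nsmul_eq_mul]
    _ = K * ∑' q, g q := ENNReal.tsum_mul_left
    _ ≤ K * ∑' n, g n := le_rfl

lemma scale (φ : OrliczFunction) {c : ℝ} (hc : 0 < c) {N : ℕ}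
    (h : ∑' n : ℕ, φ.toFun (c / ((N + n + 1 : ℕ) : ℝ)) < ⊤)
    {k : ℝ} (hk : 0 < k) :
    ∃ M : ℕ, ∑' n : ℕ, φ.toFun (k / ((M + n + 1 : ℕ) : ℝ)) < ⊤ := by
  set K : ℕ := max ⌈k / c⌉₊ 1 with hKdef
  have hK1 : 1 ≤ K := le_max_right _ _
  have hKne : K ≠ 0 := by omega
  have hkK : k ≤ K * c := by
    have h1 : k / c ≤ (⌈k / c⌉₊ : ℝ) := Nat.le_ceil _
    have h2 : (⌈k / c⌉₊ : ℝ) ≤ K := by exact_mod_cast Nat.le_max_left _ _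
    calc k = (k / c) * c := by field_simp
      _ ≤ (K : ℝ) * c := by gcongr; exact h1.trans h2
  refine ⟨K * (N + 1), ?_⟩
  have key : ∀ n : ℕ, φ.toFun (k / ((K * (N + 1) + n + 1 : ℕ) : ℝ)) ≤
      φ.toFun (c / ((N + n / K + 1 : ℕ) : ℝ)) := by
    intro n
    have hd1 : (0:ℝ) < ((K * (N + 1) + n + 1 : ℕ) : ℝ) := by positivity
    have hd2 : (0:ℝ) < ((N + n / K + 1 : ℕ) : ℝ) := by positivity
    refine φ.mono (by positivity) ?_
    rw [div_le_div_iff₀ hd1 hd2]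
    have hnat : K * (N + n / K + 1) ≤ K * (N + 1) + n + 1 := by
      have := Nat.div_mul_le_self n K
      calc K * (N + n / K + 1) = K * (N + 1) + (n / K) * K := by ring
        _ ≤ K * (N + 1) + n + 1 := by omega
    calc k * ((N + n / K + 1 : ℕ) : ℝ) ≤ (K * c) * ((N + n / K + 1 : ℕ) : ℝ) := by gcongr
      _ = c * ((K * (N + n / K + 1) : ℕ) : ℝ) := by push_cast; ring
      _ ≤ c * ((K * (N + 1) + n + 1 : ℕ) : ℝ) :=
          mul_le_mul_of_nonneg_left (by exact_mod_cast hnat) hc.le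
  calc ∑' n : ℕ, φ.toFun (k / ((K * (N + 1) + n + 1 : ℕ) : ℝ))
      ≤ ∑' n : ℕ, (fun q => φ.toFun (c / ((N + q + 1 : ℕ) : ℝ))) (n / K) :=
        ENNReal.tsum_le_tsum key
    _ ≤ K * ∑' q : ℕ, φ.toFun (c / ((N + q + 1 : ℕ) : ℝ)) := tsum_div_le K hKne _
    _ < ⊤ := ENNReal.mul_lt_top (by simp) h

/-- The Cesàro–Orlicz space `ces_φ` is nontrivial iff
`∑_{n=n₁}^∞ φ(1/n) < ∞` for some `n₁` iff `∀ k > 0, ∑_{n=n_k}^∞ φ(k/n) < ∞` for some `n_k`. -/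
theorem stmt_0 (φ : OrliczFunction) :
    List.TFAE [
      ∃ x ∈ cesOrlicz φ, x ≠ 0,
      ∃ n₁ : ℕ, ∑' n : ℕ, φ.toFun (((n₁ + n + 1 : ℕ) : ℝ)⁻¹) < ⊤,
      ∀ k : ℝ, 0 < k → ∃ nk : ℕ, ∑' n : ℕ, φ.toFun (k / ((nk + n + 1 : ℕ) : ℝ)) < ⊤ ] := by
  tfae_have 1 → 3 := by
    rintro ⟨x, ⟨lam, hlam, hρ⟩, hx⟩ k hk
    obtain ⟨j₀, hj₀⟩ : ∃ j, x j ≠ 0 := by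
      by_contra hcon
      push_neg at hcon
      exact hx (funext fun j => hcon j)
    set c : ℝ := lam * |x j₀| with hcdef
    have hc : 0 < c := mul_pos hlam (abs_pos.2 hj₀)
    have key : ∀ n : ℕ, φ.toFun (c / ((j₀ + n + 1 : ℕ) : ℝ)) ≤
        φ.toFun (cesaroMean (fun i => lam * x i) (j₀ + n)) := by
      intro n
      refine φ.mono (by positivity) ?_
      unfold cesaroMean
      have hmem : j₀ ∈ Finset.range (j₀ + n + 1) := by
        simp [Finset.mem_range]
      have hsum : c ≤ ∑ j ∈ Finset.range (j₀ + n + 1), |lam * x j| := by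
        have := Finset.single_le_sum (f := fun j => |lam * x j|)
          (fun i _ => abs_nonneg _) hmem
        calc c = |lam * x j₀| := by rw [hcdef, abs_mul, abs_of_pos hlam]
          _ ≤ _ := this
      have hd : (0:ℝ) < ((j₀ + n + 1 : ℕ) : ℝ) := by positivity
      rw [div_le_div_iff₀ hd (by positivity)]
      push_cast
      nlinarith [hsum]
    have htail : ∑' n : ℕ, φ.toFun (c / ((j₀ + n + 1 : ℕ) : ℝ)) < ⊤ := by
      calc ∑' n : ℕ, φ.toFun (c / ((j₀ + n + 1 : ℕ) : ℝ))
          ≤ ∑' n : ℕ, φ.toFun (cesaroMean (fun i => lam * x i) (j₀ + n)) :=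
            ENNReal.tsum_le_tsum key
        _ ≤ ∑' n : ℕ, φ.toFun (cesaroMean (fun i => lam * x i) n) :=
            ENNReal.tsum_comp_le_tsum_of_injective (add_right_injective j₀) _
        _ < ⊤ := hρ
    exact scale φ hc htail hk
  tfae_have 3 → 2 := by
    intro h
    obtain ⟨nk, hnk⟩ := h 1 one_pos
    exact ⟨nk, by simpa [one_div] using hnk⟩
  tfae_have 2 → 1 := by
    rintro ⟨n₁, hn₁⟩
    -- continuity at zero gives ε
    have hnhds : φ.toFun ⁻¹' Set.Iio 1 ∈ nhds (0:ℝ) :=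
      φ.continuousAtZero' (Iio_mem_nhds (by norm_num))
    obtain ⟨ε, hε, hball⟩ := Metric.mem_nhds_iff.1 hnhds
    set lam : ℝ := min (ε / 2) 1 with hlamdef
    have hlam : 0 < lam := lt_min (by positivity) one_pos
    have hlam1 : lam ≤ 1 := min_le_right _ _
    have hlamε : lam < ε := (min_le_left _ _).trans_lt (by linarith)
    refine ⟨fun i => if i = 0 then 1 else 0, ⟨lam, hlam, ?_⟩, ?_⟩
    · have hces : ∀ n : ℕ,
          cesaroMean (fun i => lam * if i = 0 then (1:ℝ) else 0) n = lam / ((n:ℝ) + 1) := by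
        intro n
        unfold cesaroMean
        congr 1
        have : ∀ j : ℕ, |lam * if j = 0 then (1:ℝ) else 0| = if j = 0 then lam else 0 := by
          intro j
          by_cases hj : j = 0 <;> simp [hj, abs_of_pos hlam]
        rw [Finset.sum_congr rfl fun j _ => this j]
        simp [Finset.sum_ite_eq', Finset.mem_range]
      unfold rho
      rw [tsum_congr fun n => by rw [hces n]]
      have hsplit := Summable.sum_add_tsum_nat_add' (f := fun n => φ.toFun (lam / ((n:ℝ) + 1))) (k := n₁)
        ENNReal.summable
      rw [← hsplit]
      have hhead : ∑ i ∈ Finset.range n₁, φ.toFun (lam / ((i:ℝ) + 1)) < ⊤ := by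
        refine ENNReal.sum_lt_top.2 fun i _ => ?_
        have harg : |lam / ((i:ℝ) + 1)| < ε := by
          rw [abs_of_pos (by positivity)]
          have : lam / ((i:ℝ) + 1) ≤ lam := by
            rw [div_le_iff₀ (by positivity)]
            nlinarith [hlam.le]
          linarith
        have : φ.toFun (lam / ((i:ℝ) + 1)) < 1 := by
          have := hball (by simpa [Metric.mem_ball, Real.dist_eq] using harg)
          exact this
        exact this.trans_le le_top
      have htail : ∑' n : ℕ, φ.toFun (lam / (((n + n₁ : ℕ):ℝ) + 1)) < ⊤ := by
        refine lt_of_le_of_lt (ENNReal.tsum_le_tsum fun n => ?_) hn₁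
        refine φ.mono (by positivity) ?_
        rw [div_le_iff₀ (by positivity), inv_mul_eq_div, le_div_iff₀ (by positivity)]
        have h1 : ((n₁ + n + 1 : ℕ) : ℝ) = ((n + n₁ : ℕ):ℝ) + 1 := by push_cast; ring
        nlinarith [hlam1, Nat.cast_nonneg (α := ℝ) (n + n₁), h1.le, h1.ge]
      exact ENNReal.add_lt_top.2 ⟨hhead, htail⟩
    · intro hzero
      have := congrFun hzero 0
      simp at this
  tfae_finish
end

section
/- Let φ be an Orlicz function such that ∑_{n=n₁}^∞ φ(1/n) < ∞ for some n₁ ∈ ℕ. Then A_φ is separable with respect to the Luxemburg norm: there exists a countable set D ⊆ A_φ such that for every x ∈ A_φ and every ε > 0 there is d ∈ D with ‖x − d‖_φ < ε. -/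
open scoped ENNReal
open Filter

namespace OrliczFunction

lemma scale (φ : OrliczFunction) {t : ℝ} (u : ℝ) (ht : 0 ≤ t) (ht1 : t ≤ 1) :
    φ.toFun (t * u) ≤ ENNReal.ofReal t * φ.toFun u := by
  have h := φ.convex' u 0 t ht ht1
  simpa [φ.map_zero'] using h

lemma mono_s5 (φ : OrliczFunction) {s t : ℝ} (hs : 0 ≤ s) (hst : s ≤ t) :
    φ.toFun s ≤ φ.toFun t := by
  rcases eq_or_lt_of_le (hs.trans hst) with h | h
  · rcases le_antisymm hst (h ▸ hs) with rfl
    exact le_rfl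
  · have h1 : s / t ≤ 1 := div_le_one_of_le₀ hst h.le
    have h0 : 0 ≤ s / t := div_nonneg hs h.le
    have h2 := φ.scale t h0 h1
    rw [div_mul_cancel₀ _ h.ne'] at h2
    calc φ.toFun s ≤ ENNReal.ofReal (s/t) * φ.toFun t := h2
    _ ≤ 1 * φ.toFun t := by gcongr; exact ENNReal.ofReal_le_one.2 h1
    _ = φ.toFun t := one_mul _

lemma add_le (φ : OrliczFunction) (a b : ℝ) :
    φ.toFun (a + b) ≤ φ.toFun (2*a) + φ.toFun (2*b) := by
  have h := φ.convex' (2*a) (2*b) (1/2) (by norm_num) (by norm_num)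
  have e : (1/2 : ℝ) * (2*a) + (1 - 1/2) * (2*b) = a + b := by ring
  rw [e] at h
  have h2 : ENNReal.ofReal (1/2) ≤ 1 := ENNReal.ofReal_le_one.2 (by norm_num)
  have h3 : ENNReal.ofReal (1 - 1/2) ≤ 1 := ENNReal.ofReal_le_one.2 (by norm_num)
  refine h.trans (add_le_add ?_ ?_)
  · calc ENNReal.ofReal (1/2) * φ.toFun (2*a) ≤ 1 * φ.toFun (2*a) := by gcongr
    _ = _ := one_mul _
  · calc ENNReal.ofReal (1-1/2) * φ.toFun (2*b) ≤ 1 * φ.toFun (2*b) := by gcongr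
    _ = _ := one_mul _

end OrliczFunction

lemma tail_le (f : ℕ → ℝ≥0∞) (i : ℕ) : ∑' n, f (n + i) ≤ ∑' n, f n := by
  exact ENNReal.tsum_comp_le_tsum_of_injective (add_left_injective i) f

lemma luxNorm_le (φ : OrliczFunction) (y : ℕ → ℝ) {lam : ℝ} (hlam : 0 < lam)
    (h : rho φ (fun i => y i / lam) ≤ 1) : luxNorm φ y ≤ lam :=
  csInf_le ⟨0, fun b hb => hb.1.le⟩ ⟨hlam, h⟩
lemma split_tsum (f : ℕ → ℝ≥0∞) (M : ℕ) :
    ∑' n, f n = ∑ n ∈ Finset.range M, f n + ∑' n, f (n + M) :=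
  (Summable.sum_add_tsum_nat_add' (f := f) (k := M) ENNReal.summable).symm
def StrongTail (φ : OrliczFunction) : Prop :=
  ∀ c : ℝ, 0 < c → ∃ N : ℕ, ∑' n : ℕ, φ.toFun (c / ((N + n + 1 : ℕ) : ℝ)) < ⊤

lemma zero_mem_Aphi (φ : OrliczFunction) : (0 : ℕ → ℝ) ∈ Aphi φ := by
  constructor
  · refine ⟨1, one_pos, ?_⟩
    have : ∀ n, cesaroMean (fun i => 1 * (0 : ℕ → ℝ) i) n = 0 := by
      intro n; simp [cesaroMean]
    simp only [rho, this, φ.map_zero', tsum_zero]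
    exact ENNReal.zero_lt_top
  · intro k hk
    refine ⟨0, ?_⟩
    simp only [Pi.zero_apply, abs_zero, Finset.sum_const, smul_zero, mul_zero, φ.map_zero',
      tsum_zero]
    exact ENNReal.zero_lt_top

lemma strongTail_of_mem (φ : OrliczFunction) {x : ℕ → ℝ} (hx : x ∈ Aphi φ)
    (hne : x ≠ 0) : StrongTail φ := by
  obtain ⟨i₀, hi₀⟩ : ∃ i₀, x i₀ ≠ 0 := by
    by_contra h
    push_neg at h
    exact hne (funext h)
  set c₀ : ℝ := |x i₀| with hc₀
  have hc₀pos : 0 < c₀ := abs_pos.2 hi₀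
  intro c hc
  obtain ⟨nk, hnk⟩ := hx.2 (c / c₀) (div_pos hc hc₀pos)
  refine ⟨nk + i₀, ?_⟩
  set f : ℕ → ℝ≥0∞ := fun n =>
    φ.toFun ((c / c₀ / ((nk + n + 1 : ℕ) : ℝ)) * ∑ i ∈ Finset.range (nk + n + 1), |x i|) with hf
  have key : ∀ n : ℕ, φ.toFun (c / ((nk + i₀ + n + 1 : ℕ) : ℝ)) ≤ f (n + i₀) := by
    intro n
    have hle : c₀ ≤ ∑ i ∈ Finset.range (nk + (n + i₀) + 1), |x i| := by
      refine Finset.single_le_sum (fun i _ => abs_nonneg (x i)) ?_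
      simp [Finset.mem_range]; omega
    have hpos : (0:ℝ) < ((nk + (n + i₀) + 1 : ℕ) : ℝ) := by positivity
    have harg : c / ((nk + i₀ + n + 1 : ℕ) : ℝ)
        = (c / c₀ / ((nk + (n + i₀) + 1 : ℕ) : ℝ)) * c₀ := by
      have : (nk + i₀ + n + 1 : ℕ) = (nk + (n + i₀) + 1 : ℕ) := by omega
      rw [this]
      field_simp
    rw [harg, hf]
    exact φ.mono_s5 (by positivity) (by
      have h0 : 0 ≤ c / c₀ / ((nk + (n + i₀) + 1 : ℕ) : ℝ) := by positivity
      exact mul_le_mul_of_nonneg_left hle h0)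
  calc ∑' n : ℕ, φ.toFun (c / ((nk + i₀ + n + 1 : ℕ) : ℝ))
      ≤ ∑' n : ℕ, f (n + i₀) := ENNReal.tsum_le_tsum key
    _ ≤ ∑' n, f n := tail_le f i₀
    _ < ⊤ := hnk
lemma exists_good (φ : OrliczFunction) (hst : StrongTail φ) :
    ∃ c0 : ℝ, 0 < c0 ∧ φ.toFun c0 < ⊤ ∧
      ∑' n : ℕ, φ.toFun (c0 / ((n + 1 : ℕ) : ℝ)) < ⊤ := by
  obtain ⟨N, hN⟩ := hst 1 one_pos
  set c0 : ℝ := 1 / ((N + 1 : ℕ) : ℝ) with hc0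
  have hc0pos : 0 < c0 := by positivity
  have hc0le1 : c0 ≤ 1 := by
    rw [hc0]
    rw [div_le_one (by positivity)]
    exact_mod_cast Nat.one_le_iff_ne_zero.2 (Nat.succ_ne_zero N)
  have hterm : φ.toFun c0 < ⊤ := by
    have h0 := ENNReal.le_tsum (f := fun n => φ.toFun (1 / ((N + n + 1 : ℕ) : ℝ))) 0
    have : φ.toFun c0 ≤ ∑' n : ℕ, φ.toFun (1 / ((N + n + 1 : ℕ) : ℝ)) := by
      simpa [hc0, one_div] using h0
    exact lt_of_le_of_lt this hN
  refine ⟨c0, hc0pos, hterm, ?_⟩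
  set g : ℕ → ℝ≥0∞ := fun n => φ.toFun (c0 / ((n + 1 : ℕ) : ℝ)) with hg
  rw [split_tsum g N]
  have hhead : ∑ n ∈ Finset.range N, g n < ⊤ := by
    refine ENNReal.sum_lt_top.2 fun n _ => lt_of_le_of_lt ?_ hterm
    refine φ.mono_s5 (by positivity) ?_
    have h1 : (1:ℝ) ≤ ((n + 1 : ℕ) : ℝ) := by exact_mod_cast Nat.one_le_iff_ne_zero.2 (Nat.succ_ne_zero n)
    rw [div_le_iff₀ (by positivity)]
    nlinarith [hc0pos]
  have htail : ∑' n, g (n + N) < ⊤ := by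
    refine lt_of_le_of_lt (ENNReal.tsum_le_tsum fun n => ?_) hN
    refine φ.mono_s5 (by positivity) ?_
    have he : (n + N + 1 : ℕ) = (N + n + 1 : ℕ) := by omega
    rw [he]
    gcongr
  exact ENNReal.add_lt_top.2 ⟨hhead, htail⟩
lemma finsupp_mem_Aphi (φ : OrliczFunction) (hst : StrongTail φ) (q : ℕ →₀ ℚ) :
    (fun i => ((q i : ℚ) : ℝ)) ∈ Aphi φ := by
  obtain ⟨c0, hc0pos, hc0fin, hc0sum⟩ := exists_good φ hst
  set d : ℕ → ℝ := fun i => ((q i : ℚ) : ℝ) with hd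
  set B : ℝ := ∑ j ∈ q.support, |d j| with hB
  have hBnn : 0 ≤ B := Finset.sum_nonneg fun j _ => abs_nonneg _
  have hP : ∀ t : ℕ, ∑ j ∈ Finset.range t, |d j| ≤ B := by
    intro t
    rw [hB, ← Finset.sum_filter_of_ne (p := fun j => j ∈ q.support)
      (fun j _ hj => by
        simp only [Finsupp.mem_support_iff]
        intro h0
        exact hj (by simp [hd, h0]))]
    refine Finset.sum_le_sum_of_subset_of_nonneg
      (fun j hj => (Finset.mem_filter.1 hj).2) (fun j _ _ => abs_nonneg _)
  have hPnn : ∀ t : ℕ, (0:ℝ) ≤ ∑ j ∈ Finset.range t, |d j| :=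
    fun t => Finset.sum_nonneg fun j _ => abs_nonneg _
  by_cases hB0 : B = 0
  · have hzero : ∀ t : ℕ, ∑ j ∈ Finset.range t, |d j| = 0 :=
      fun t => le_antisymm (hB0 ▸ hP t) (hPnn t)
    constructor
    · refine ⟨1, one_pos, ?_⟩
      have hc : ∀ n, cesaroMean (fun i => 1 * d i) n = 0 := by
        intro n
        simp only [cesaroMean, one_mul]
        rw [hzero (n+1)]
        simp
      simp only [rho, hc, φ.map_zero', tsum_zero]
      exact ENNReal.zero_lt_top
    · intro k hk
      refine ⟨0, ?_⟩
      have hc : ∀ n : ℕ, (k / ((0 + n + 1 : ℕ) : ℝ)) * ∑ i ∈ Finset.range (0 + n + 1), |d i| = 0 := by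
        intro n; rw [hzero]; ring
      simp only [hc, φ.map_zero', tsum_zero]
      exact ENNReal.zero_lt_top
  · have hBpos : 0 < B := lt_of_le_of_ne hBnn (Ne.symm hB0)
    constructor
    · refine ⟨c0 / B, by positivity, ?_⟩
      refine lt_of_le_of_lt (ENNReal.tsum_le_tsum (fun n => ?_)) hc0sum
      have hcm : cesaroMean (fun i => (c0 / B) * d i) n
          = (c0 / B) * (∑ j ∈ Finset.range (n+1), |d j|) / ((n+1 : ℕ) : ℝ) := by
        simp only [cesaroMean, abs_mul, abs_of_pos (show (0:ℝ) < c0 / B by positivity),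
          ← Finset.mul_sum]
        push_cast
        ring
      rw [hcm]
      refine φ.mono_s5 (by positivity) ?_
      rw [div_le_div_iff₀ (by positivity) (by positivity)]
      have := hP (n+1)
      have hden : (0:ℝ) < ((n+1 : ℕ) : ℝ) := by positivity
      calc (c0 / B) * (∑ j ∈ Finset.range (n+1), |d j|) * ((n+1 : ℕ) : ℝ)
          ≤ (c0 / B) * B * ((n+1 : ℕ) : ℝ) := by
            have : (c0 / B) * (∑ j ∈ Finset.range (n+1), |d j|) ≤ (c0 / B) * B :=
              mul_le_mul_of_nonneg_left (hP (n+1)) (by positivity)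
            exact mul_le_mul_of_nonneg_right this hden.le
        _ = c0 * ((n+1 : ℕ) : ℝ) := by field_simp
    · intro k hk
      obtain ⟨N, hN⟩ := hst (k * B) (by positivity)
      refine ⟨N, lt_of_le_of_lt (ENNReal.tsum_le_tsum (fun n => ?_)) hN⟩
      refine φ.mono_s5 ?_ ?_
      · have := hPnn (N + n + 1)
        positivity
      · rw [div_mul_eq_mul_div, div_le_div_iff₀ (by positivity) (by positivity)]
        have h1 := hP (N + n + 1)
        have hden : (0:ℝ) < ((N + n + 1 : ℕ) : ℝ) := by positivity
        nlinarith [mul_le_mul_of_nonneg_left h1 hk.le]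
set_option maxHeartbeats 2000000 in
/-- `A_φ` is separable with respect to the Luxemburg norm. -/
theorem stmt_5 (φ : OrliczFunction) (htail : TailFinite φ) :
    ∃ D : Set (ℕ → ℝ), D.Countable ∧ D ⊆ Aphi φ ∧
      ∀ x ∈ Aphi φ, ∀ ε : ℝ, 0 < ε → ∃ d ∈ D, luxNorm φ (fun i => x i - d i) < ε := by
  by_cases hst : StrongTail φ
  · -- main case
    obtain ⟨c0, hc0pos, hc0fin, hc0sum⟩ := exists_good φ hst
    obtain ⟨N, hN⟩ := hst 1 one_pos
    refine ⟨Set.range (fun q : ℕ →₀ ℚ => fun i => ((q i : ℚ) : ℝ)),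
      Set.countable_range _, ?_, ?_⟩
    · rintro _ ⟨q, rfl⟩
      exact finsupp_mem_Aphi φ hst q
    · intro x hx ε hε
      obtain ⟨lam, hlam, hlamε⟩ : ∃ l : ℝ, 0 < l ∧ l < ε := ⟨ε/2, by positivity, by linarith⟩
      obtain ⟨m, hm⟩ := hx.2 (2 / lam) (by positivity)
      set f : ℕ → ℝ≥0∞ := fun n =>
        φ.toFun ((2 / lam) / ((m + n + 1 : ℕ) : ℝ) * ∑ i ∈ Finset.range (m + n + 1), |x i|)
        with hfdef
      have hf3 : ∀ᶠ i in atTop, ∑' n, f (n + i) < ENNReal.ofReal (1/3) :=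
        (ENNReal.tendsto_sum_nat_add f hm.ne).eventually_lt_const
          (ENNReal.ofReal_pos.2 (by norm_num))
      obtain ⟨i, hiN, hi3⟩ := ((eventually_ge_atTop N).and hf3).exists
      set M : ℕ := m + i with hMdef
      have hMN : N ≤ M := le_trans hiN (Nat.le_add_left i m)
      obtain ⟨p, hpnn, hpeq⟩ : ∃ p : ℝ, 0 ≤ p ∧ φ.toFun c0 = ENNReal.ofReal p :=
        ⟨(φ.toFun c0).toReal, ENNReal.toReal_nonneg, (ENNReal.ofReal_toReal hc0fin.ne).symm⟩
      set G : ℝ≥0∞ := ∑' n : ℕ, φ.toFun (1 / ((N + n + 1 : ℕ) : ℝ)) with hGdef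
      obtain ⟨g, hgnn, hGeq⟩ : ∃ g : ℝ, 0 ≤ g ∧ G = ENNReal.ofReal g :=
        ⟨G.toReal, ENNReal.toReal_nonneg, (ENNReal.ofReal_toReal hN.ne).symm⟩
      obtain ⟨δ, hδpos, hδ1, hδ2, hδ3⟩ : ∃ δ : ℝ, 0 < δ ∧ δ ≤ lam / 2 ∧
          δ ≤ lam * c0 / (3 * ((M:ℝ) * p + 1)) ∧ δ ≤ lam / (6 * (g+1)) :=
        ⟨min (lam/2) (min (lam * c0 / (3 * ((M:ℝ) * p + 1))) (lam / (6 * (g+1)))),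
          lt_min (by positivity) (lt_min (by positivity) (by positivity)),
          min_le_left _ _, le_trans (min_le_right _ _) (min_le_left _ _),
          le_trans (min_le_right _ _) (min_le_right _ _)⟩
      have hδc0 : δ ≤ lam * c0 := by
        refine hδ2.trans ?_
        rw [div_le_iff₀ (by positivity)]
        nlinarith [mul_nonneg (Nat.cast_nonneg (α := ℝ) M) hpnn, mul_nonneg (mul_nonneg hlam.le hc0pos.le) (mul_nonneg (Nat.cast_nonneg (α := ℝ) M) hpnn)]
      have hδM : 0 < δ / ((M:ℝ) + 1) := by positivity
      -- rational approximations
      have hqex : ∀ j : ℕ, ∃ r : ℚ, |x j - (r:ℝ)| < δ / ((M:ℝ) + 1) :=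
        fun j => exists_rat_near (x j) hδM
      choose qf hqf using hqex
      set Q : ℕ →₀ ℚ := Finsupp.onFinset (Finset.range M)
        (fun j => if j < M then qf j else 0)
        (fun j hj => Finset.mem_range.2 (by by_contra h; simp [if_neg h] at hj)) with hQdef
      set d : ℕ → ℝ := fun i => ((Q i : ℚ) : ℝ) with hddef
      have hdj : ∀ j, d j = if j < M then ((qf j : ℚ) : ℝ) else 0 := by
        intro j
        simp only [hddef, hQdef, Finsupp.onFinset_apply]
        split <;> simp
      refine ⟨d, ⟨Q, rfl⟩, ?_⟩
      -- the estimate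
      set E : ℕ → ℝ := fun t => ∑ j ∈ Finset.range t, |x j - d j| with hEdef
      set S : ℕ → ℝ := fun t => ∑ j ∈ Finset.range t, |x j| with hSdef
      have hEnn : ∀ t, 0 ≤ E t := fun t => Finset.sum_nonneg fun j _ => abs_nonneg _
      have hSnn : ∀ t, 0 ≤ S t := fun t => Finset.sum_nonneg fun j _ => abs_nonneg _
      have hterm : ∀ j, |x j - d j| ≤ (if j < M then δ/((M:ℝ)+1) else 0) + |x j| := by
        intro j
        rcases lt_or_ge j M with h | h
        · rw [hdj j, if_pos h, if_pos h]
          calc |x j - (qf j : ℝ)| ≤ δ/((M:ℝ)+1) := (hqf j).le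
          _ ≤ δ/((M:ℝ)+1) + |x j| := le_add_of_nonneg_right (abs_nonneg _)
        · rw [hdj j, if_neg (not_lt.2 h), if_neg (not_lt.2 h), sub_zero, zero_add]
      have hitesum : ∀ t : ℕ, ∑ j ∈ Finset.range t, (if j < M then δ/((M:ℝ)+1) else 0) ≤ δ := by
        intro t
        rw [← Finset.sum_filter]
        have hsub : (Finset.range t).filter (· < M) ⊆ Finset.range M := by
          intro j hj
          exact Finset.mem_range.2 (Finset.mem_filter.1 hj).2
        calc ∑ _j ∈ (Finset.range t).filter (· < M), δ/((M:ℝ)+1)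
            = ((Finset.range t).filter (· < M)).card * (δ/((M:ℝ)+1)) := by
              rw [Finset.sum_const, nsmul_eq_mul]
          _ ≤ (M:ℝ) * (δ/((M:ℝ)+1)) := by
              have hcard := Finset.card_le_card hsub
              rw [Finset.card_range] at hcard
              have : (((Finset.range t).filter (· < M)).card : ℝ) ≤ (M:ℝ) := by exact_mod_cast hcard
              exact mul_le_mul_of_nonneg_right this hδM.le
          _ ≤ δ := by
              rw [mul_div_assoc']
              rw [div_le_iff₀ (by positivity)]
              nlinarith
      have hE : ∀ t, E t ≤ δ + S t := by
        intro t
        calc E t ≤ ∑ j ∈ Finset.range t, ((if j < M then δ/((M:ℝ)+1) else 0) + |x j|) :=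
              Finset.sum_le_sum (fun j _ => hterm j)
          _ = (∑ j ∈ Finset.range t, (if j < M then δ/((M:ℝ)+1) else 0)) + S t := by
              rw [Finset.sum_add_distrib]
          _ ≤ δ + S t := add_le_add_left (hitesum t) _
      have hEhead : ∀ t, t ≤ M → E t ≤ δ := by
        intro t ht
        calc E t ≤ ∑ j ∈ Finset.range t, ((if j < M then δ/((M:ℝ)+1) else 0) + 0) := by
              refine Finset.sum_le_sum (fun j hj => ?_)
              have hjM : j < M := lt_of_lt_of_le (Finset.mem_range.1 hj) ht
              rw [hdj j, if_pos hjM, if_pos hjM, add_zero]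
              exact (hqf j).le
          _ ≤ δ := by simpa using hitesum t
      have hcm : ∀ n : ℕ, cesaroMean (fun i => (x i - d i) / lam) n
          = E (n+1) / lam / ((n:ℝ) + 1) := by
        intro n
        simp only [cesaroMean, hEdef]
        rw [show (∑ j ∈ Finset.range (n+1), |(x j - d j)/lam|)
            = (∑ j ∈ Finset.range (n+1), |x j - d j|) / lam from by
          rw [Finset.sum_div]
          exact Finset.sum_congr rfl fun j _ => by rw [abs_div, abs_of_pos hlam]]
      have hrho : rho φ (fun i => (x i - d i) / lam) ≤ 1 := by
        rw [rho, split_tsum (fun n => φ.toFun (cesaroMean (fun i => (x i - d i)/lam) n)) M]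
        have hhead : ∑ n ∈ Finset.range M, φ.toFun (cesaroMean (fun i => (x i - d i)/lam) n)
            ≤ ENNReal.ofReal (1/3) := by
          have hb : ∀ n ∈ Finset.range M, φ.toFun (cesaroMean (fun i => (x i - d i)/lam) n)
              ≤ ENNReal.ofReal (δ/(lam*c0)) * ENNReal.ofReal p := by
            intro n hn
            rw [hcm n]
            have h1 : E (n+1)/lam/((n:ℝ)+1) ≤ δ/lam := by
              have hE1 : E (n+1) ≤ δ := hEhead (n+1) (Finset.mem_range.1 hn)
              rw [div_div, div_le_div_iff₀ (by positivity) hlam]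
              nlinarith [mul_le_mul_of_nonneg_right hE1 hlam.le,
                mul_nonneg (mul_nonneg hδpos.le hlam.le) (Nat.cast_nonneg (α := ℝ) n)]
            refine le_trans (φ.mono_s5 (by positivity) h1) ?_
            have h2 : δ/lam = (δ/(lam*c0)) * c0 := by
              field_simp
            rw [h2]
            refine le_trans (φ.scale c0 (by positivity) ?_) ?_
            · rw [div_le_one (by positivity)]; linarith [hδc0]
            · rw [hpeq]
          refine le_trans (Finset.sum_le_sum hb) ?_
          rw [Finset.sum_const, Finset.card_range, nsmul_eq_mul]
          have hδ2' : δ * (3 * ((M:ℝ)*p+1)) ≤ lam * c0 := by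
            rw [← le_div_iff₀ (by positivity)]; exact hδ2
          calc ((M:ℕ) : ℝ≥0∞) * (ENNReal.ofReal (δ/(lam*c0)) * ENNReal.ofReal p)
              = ENNReal.ofReal ((M:ℝ) * (δ/(lam*c0) * p)) := by
                rw [ENNReal.ofReal_mul (by positivity), ENNReal.ofReal_mul (by positivity),
                  ENNReal.ofReal_natCast]
            _ ≤ ENNReal.ofReal (1/3) := by
                refine ENNReal.ofReal_le_ofReal ?_
                rw [div_mul_eq_mul_div, mul_div_assoc', div_le_div_iff₀ (by positivity) (by norm_num)]
                nlinarith [hδpos.le, hpnn, Nat.cast_nonneg (α := ℝ) M]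
        have htailb : ∑' j : ℕ, φ.toFun (cesaroMean (fun i => (x i - d i)/lam) (j + M))
            ≤ ENNReal.ofReal (1/3) + ENNReal.ofReal (1/3) := by
          have hb : ∀ j : ℕ, φ.toFun (cesaroMean (fun i => (x i - d i)/lam) (j + M))
              ≤ ENNReal.ofReal (2*δ/lam) * φ.toFun (1/((N + j + 1 : ℕ):ℝ)) + f (j + i) := by
            intro j
            rw [hcm (j+M)]
            have harg : E ((j+M)+1)/lam/(((j+M:ℕ):ℝ)+1)
                ≤ 2*(δ/(lam*(((j+M:ℕ):ℝ)+1))) / 2 + 2*(S ((j+M)+1)/(lam*(((j+M:ℕ):ℝ)+1))) / 2 := by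
              have hEb := hE ((j+M)+1)
              have hden : (0:ℝ) < lam*(((j+M:ℕ):ℝ)+1) := by positivity
              rw [div_div]
              rw [show (2:ℝ)*(δ/(lam*(((j+M:ℕ):ℝ)+1)))/2 = δ/(lam*(((j+M:ℕ):ℝ)+1)) by ring,
                show (2:ℝ)*(S ((j+M)+1)/(lam*(((j+M:ℕ):ℝ)+1)))/2 = S ((j+M)+1)/(lam*(((j+M:ℕ):ℝ)+1)) by ring,
                ← add_div]
              gcongr
            have harg' : E ((j+M)+1)/lam/(((j+M:ℕ):ℝ)+1)
                ≤ δ/(lam*(((j+M:ℕ):ℝ)+1)) + S ((j+M)+1)/(lam*(((j+M:ℕ):ℝ)+1)) := by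
              refine le_trans harg (le_of_eq ?_); ring
            refine le_trans (φ.mono_s5 (by positivity) harg') ?_
            refine le_trans (φ.add_le _ _) ?_
            refine add_le_add ?_ ?_
            · have e1 : 2*(δ/(lam*(((j+M:ℕ):ℝ)+1))) = (2*δ/lam) * (1/(((j+M:ℕ):ℝ)+1)) := by
                field_simp
              rw [e1]
              refine le_trans (φ.scale _ (by positivity) ?_) ?_
              · rw [div_le_one hlam]; linarith [hδ1]
              · gcongr
                refine φ.mono_s5 (by positivity) ?_
                have hle : ((N + j + 1 : ℕ):ℝ) ≤ ((j+M:ℕ):ℝ)+1 := by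
                  push_cast
                  have : (N:ℝ) ≤ (M:ℝ) := by exact_mod_cast hMN
                  linarith
                rw [div_le_div_iff₀ (by positivity) (by positivity)]
                nlinarith [hle]
            · have hn1 : (j+M) + 1 = m + (j + i) + 1 := by omega
              have e2 : 2*(S ((j+M)+1)/(lam*(((j+M:ℕ):ℝ)+1)))
                  = (2/lam)/((m + (j+i) + 1 : ℕ):ℝ) * S (m + (j+i) + 1) := by
                rw [hn1]
                have hc : (((j+M:ℕ):ℝ)+1) = ((m + (j+i) + 1 : ℕ):ℝ) := by
                  push_cast; simp only [hMdef]; push_cast; ring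
                rw [hc]
                field_simp
              rw [e2]
          refine le_trans (ENNReal.tsum_le_tsum hb) ?_
          rw [ENNReal.tsum_add, ENNReal.tsum_mul_left]
          refine add_le_add ?_ hi3.le
          rw [← hGdef, hGeq, ← ENNReal.ofReal_mul (by positivity)]
          refine ENNReal.ofReal_le_ofReal ?_
          have hδ3' : δ * (6*(g+1)) ≤ lam := by
            rw [← le_div_iff₀ (by positivity)]; exact hδ3
          rw [div_mul_eq_mul_div, div_le_div_iff₀ hlam (by norm_num)]
          nlinarith [hgnn, hδpos.le]
        calc ∑ n ∈ Finset.range M, φ.toFun (cesaroMean (fun i => (x i - d i)/lam) n)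
              + ∑' n : ℕ, φ.toFun (cesaroMean (fun i => (x i - d i)/lam) (n + M))
            ≤ ENNReal.ofReal (1/3) + (ENNReal.ofReal (1/3) + ENNReal.ofReal (1/3)) :=
              add_le_add hhead htailb
          _ = ENNReal.ofReal 1 := by
              rw [← ENNReal.ofReal_add (by norm_num) (by norm_num),
                ← ENNReal.ofReal_add (by norm_num) (by norm_num)]
              norm_num
          _ = 1 := ENNReal.ofReal_one
      have hfin := luxNorm_le φ (fun i => x i - d i) hlam hrho
      calc luxNorm φ (fun i => x i - d i) ≤ lam := hfin
        _ < ε := hlamε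
  · -- degenerate case
    refine ⟨{0}, Set.countable_singleton _, by
      simpa [Set.singleton_subset_iff] using zero_mem_Aphi φ, ?_⟩
    intro x hx ε hε
    have hx0 : x = 0 := by
      by_contra h
      exact hst (strongTail_of_mem φ hx h)
    refine ⟨0, rfl, ?_⟩
    subst hx0
    have h1 : luxNorm φ (fun i => (0:ℕ→ℝ) i - (0:ℕ→ℝ) i) ≤ ε/2 := by
      refine luxNorm_le φ _ (by positivity) ?_
      have hz : ∀ n, cesaroMean (fun i => ((0:ℕ→ℝ) i - (0:ℕ→ℝ) i) / (ε/2)) n = 0 := by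
        intro n; simp [cesaroMean]
      simp only [rho, hz, φ.map_zero', tsum_zero]
      exact zero_le_one
    calc luxNorm φ (fun i => (0:ℕ→ℝ) i - (0:ℕ→ℝ) i) ≤ ε/2 := h1
      _ < ε := by linarith
end

section
/- Let φ be an Orlicz function such that ∑_{n=n₁}^∞ φ(1/n) < ∞ for some n₁ ∈ ℕ. Then A_φ equals the closure, with respect to the Luxemburg norm in ces_φ, of the set of all sequences x ∈ ces_φ having only finitely many nonzero coordinates. -/
open scoped ENNReal
open Filter

lemma OrliczFunction.mono_s6 (φ : OrliczFunction) {s t : ℝ} (hs : 0 ≤ s) (hst : s ≤ t) :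
    φ.toFun s ≤ φ.toFun t := by
  by_cases ht : t = 0
  · have : s = 0 := le_antisymm (ht ▸ hst) hs
    simp [this, ht]
  · have ht' : 0 < t := lt_of_le_of_ne (hs.trans hst) (Ne.symm ht)
    have h1 : s / t ≤ 1 := (div_le_one ht').mpr hst
    have h0 : 0 ≤ s / t := div_nonneg hs ht'.le
    have h := φ.convex' t 0 (s / t) h0 h1
    rw [mul_zero, add_zero, div_mul_cancel₀ _ (ne_of_gt ht'), φ.map_zero', mul_zero,
      add_zero] at h
    calc φ.toFun s ≤ ENNReal.ofReal (s / t) * φ.toFun t := h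
      _ ≤ 1 * φ.toFun t := by
          gcongr
          exact ENNReal.ofReal_le_one.mpr h1
      _ = φ.toFun t := one_mul _

lemma OrliczFunction.scale_s6 (φ : OrliczFunction) {t : ℝ} (u : ℝ) (h0 : 0 ≤ t) (h1 : t ≤ 1) :
    φ.toFun (t * u) ≤ ENNReal.ofReal t * φ.toFun u := by
  have h := φ.convex' u 0 t h0 h1
  rwa [mul_zero, add_zero, φ.map_zero', mul_zero, add_zero] at h

lemma OrliczFunction.add_le_s6 (φ : OrliczFunction) (a b : ℝ) :
    φ.toFun (a + b) ≤ φ.toFun (2 * a) + φ.toFun (2 * b) := by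
  have h := φ.convex' (2 * a) (2 * b) (1/2) (by norm_num) (by norm_num)
  have e : (1/2 : ℝ) * (2 * a) + (1 - 1/2) * (2 * b) = a + b := by ring
  rw [e] at h
  refine h.trans (add_le_add ?_ ?_) <;>
    exact mul_le_of_le_one_left (by simp) (ENNReal.ofReal_le_one.mpr (by norm_num))

lemma cesaroMean_nonneg (x : ℕ → ℝ) (n : ℕ) : 0 ≤ cesaroMean x n :=
  div_nonneg (Finset.sum_nonneg fun i _ => abs_nonneg _) (by positivity)

lemma cesaroMean_mono_abs {x y : ℕ → ℝ} (h : ∀ i, |x i| ≤ |y i|) (n : ℕ) :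
    cesaroMean x n ≤ cesaroMean y n := by
  unfold cesaroMean
  rw [div_le_div_iff_of_pos_right (by positivity)]
  exact Finset.sum_le_sum fun i _ => h i

lemma cesaroMean_smul {c : ℝ} (hc : 0 ≤ c) (x : ℕ → ℝ) (n : ℕ) :
    cesaroMean (fun i => c * x i) n = c * cesaroMean x n := by
  unfold cesaroMean
  simp only [abs_mul, abs_of_nonneg hc]
  rw [← Finset.mul_sum, mul_div_assoc]

lemma cesaroMean_div {c : ℝ} (hc : 0 < c) (x : ℕ → ℝ) (n : ℕ) :
    cesaroMean (fun i => x i / c) n = cesaroMean x n / c := by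
  simp only [div_eq_inv_mul]
  exact cesaroMean_smul (by positivity) x n

lemma cesaroMean_sub_le (x y : ℕ → ℝ) (n : ℕ) :
    cesaroMean (fun i => x i - y i) n ≤ cesaroMean x n + cesaroMean y n := by
  unfold cesaroMean
  rw [← add_div]
  have hpos : (0:ℝ) < (n:ℝ) + 1 := by positivity
  rw [div_le_div_iff_of_pos_right hpos]
  rw [← Finset.sum_add_distrib]
  exact Finset.sum_le_sum fun i _ => abs_sub _ _

lemma rho_mono (φ : OrliczFunction) {x y : ℕ → ℝ} (h : ∀ i, |x i| ≤ |y i|) :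
    rho φ x ≤ rho φ y :=
  ENNReal.tsum_le_tsum fun n => φ.mono_s6 (cesaroMean_nonneg x n) (cesaroMean_mono_abs h n)

lemma tsum_shift_le (f : ℕ → ℝ≥0∞) (k : ℕ) : ∑' n, f (n + k) ≤ ∑' n, f n := by
  rw [← Summable.sum_add_tsum_nat_add' (f := f) (k := k) ENNReal.summable]
  exact le_add_self

lemma aphi_term (φ : OrliczFunction) (k : ℝ) (x : ℕ → ℝ) (m n : ℕ) :
    (k / ((m + n + 1 : ℕ) : ℝ)) * ∑ i ∈ Finset.range (m + n + 1), |x i|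
      = k * cesaroMean x (m + n) := by
  unfold cesaroMean
  push_cast
  ring

lemma cesOrlicz_sub (φ : OrliczFunction) {x y : ℕ → ℝ} (hx : x ∈ cesOrlicz φ)
    (hy : y ∈ cesOrlicz φ) : (fun i => x i - y i) ∈ cesOrlicz φ := by
  obtain ⟨l₁, hl₁, H₁⟩ := hx
  obtain ⟨l₂, hl₂, H₂⟩ := hy
  set lam := min l₁ l₂ / 2 with hlam_def
  have hlam : 0 < lam := by positivity
  refine ⟨lam, hlam, ?_⟩
  have key : ∀ n, φ.toFun (cesaroMean (fun i => lam * (x i - y i)) n)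
      ≤ φ.toFun (cesaroMean (fun i => l₁ * x i) n) + φ.toFun (cesaroMean (fun i => l₂ * y i) n) := by
    intro n
    rw [cesaroMean_smul hlam.le, cesaroMean_smul hl₁.le, cesaroMean_smul hl₂.le]
    have h1 : lam * cesaroMean (fun i => x i - y i) n
        ≤ lam * cesaroMean x n + lam * cesaroMean y n := by
      rw [← mul_add]
      exact mul_le_mul_of_nonneg_left (cesaroMean_sub_le x y n) hlam.le
    have h2l₁ : 2 * lam ≤ l₁ := by
      rw [hlam_def]; have := min_le_left l₁ l₂; linarith
    have h2l₂ : 2 * lam ≤ l₂ := by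
      rw [hlam_def]; have := min_le_right l₁ l₂; linarith
    refine (φ.mono_s6 (mul_nonneg hlam.le (cesaroMean_nonneg _ _)) h1).trans ?_
    refine (φ.add_le_s6 _ _).trans ?_
    gcongr
    · exact φ.mono_s6 (mul_nonneg two_pos.le (mul_nonneg hlam.le (cesaroMean_nonneg _ _))) (by
        rw [← mul_assoc]
        exact mul_le_mul_of_nonneg_right h2l₁ (cesaroMean_nonneg x n))
    · exact φ.mono_s6 (mul_nonneg two_pos.le (mul_nonneg hlam.le (cesaroMean_nonneg _ _))) (by
        rw [← mul_assoc]
        exact mul_le_mul_of_nonneg_right h2l₂ (cesaroMean_nonneg y n))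
  calc rho φ (fun i => lam * (x i - y i))
      ≤ ∑' n, (φ.toFun (cesaroMean (fun i => l₁ * x i) n)
          + φ.toFun (cesaroMean (fun i => l₂ * y i) n)) := ENNReal.tsum_le_tsum key
    _ = rho φ (fun i => l₁ * x i) + rho φ (fun i => l₂ * y i) := ENNReal.tsum_add
    _ < ⊤ := ENNReal.add_lt_top.mpr ⟨H₁, H₂⟩

lemma luxNorm_set_nonempty (φ : OrliczFunction) {z : ℕ → ℝ} (hz : z ∈ cesOrlicz φ) :
    {lam : ℝ | 0 < lam ∧ rho φ (fun i => z i / lam) ≤ 1}.Nonempty := by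
  obtain ⟨l₀, hl₀, H₀⟩ := hz
  set R := rho φ (fun i => l₀ * z i) with hR
  set t : ℝ := min 1 (1 / (R.toReal + 1)) with ht_def
  have hRt : 0 ≤ R.toReal := ENNReal.toReal_nonneg
  have ht0 : 0 < t := by
    apply lt_min one_pos
    positivity
  have ht1 : t ≤ 1 := min_le_left _ _
  have hrho : rho φ (fun i => t * l₀ * z i) ≤ 1 := by
    have step : ∀ n, φ.toFun (cesaroMean (fun i => t * l₀ * z i) n)
        ≤ ENNReal.ofReal t * φ.toFun (cesaroMean (fun i => l₀ * z i) n) := by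
      intro n
      have : cesaroMean (fun i => t * l₀ * z i) n = t * cesaroMean (fun i => l₀ * z i) n := by
        rw [← cesaroMean_smul ht0.le (fun i => l₀ * z i) n]
        congr 1 with i
        ring
      rw [this]
      exact φ.scale_s6 _ ht0.le ht1
    calc rho φ (fun i => t * l₀ * z i)
        ≤ ∑' n, ENNReal.ofReal t * φ.toFun (cesaroMean (fun i => l₀ * z i) n) :=
          ENNReal.tsum_le_tsum step
      _ = ENNReal.ofReal t * R := by rw [ENNReal.tsum_mul_left]; rfl
      _ ≤ 1 := by
          have hfin : R ≠ ⊤ := H₀.ne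
          rw [← ENNReal.ofReal_toReal hfin, ← ENNReal.ofReal_mul ht0.le, ← ENNReal.ofReal_one]
          apply ENNReal.ofReal_le_ofReal
          have h1 : t ≤ 1 / (R.toReal + 1) := min_le_right _ _
          calc t * R.toReal ≤ (1 / (R.toReal + 1)) * R.toReal :=
                mul_le_mul_of_nonneg_right h1 hRt
            _ ≤ 1 := by
                rw [div_mul_eq_mul_div, one_mul, div_le_one (by positivity)]
                linarith
  refine ⟨1 / (t * l₀), ⟨by positivity, ?_⟩⟩
  have : (fun i => z i / (1 / (t * l₀))) = fun i => t * l₀ * z i := by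
    funext i
    field_simp
  rw [this]
  exact hrho

lemma cesaroMean_add_le (x y : ℕ → ℝ) (n : ℕ) :
    cesaroMean (fun i => x i + y i) n ≤ cesaroMean x n + cesaroMean y n := by
  unfold cesaroMean
  rw [← add_div, div_le_div_iff_of_pos_right (by positivity), ← Finset.sum_add_distrib]
  exact Finset.sum_le_sum fun i _ => abs_add_le _ _

lemma subset_dir (φ : OrliczFunction) {x : ℕ → ℝ} (hx : x ∈ cesOrlicz φ)
    (hA : ∀ k : ℝ, 0 < k → ∃ nk : ℕ,
      ∑' n : ℕ, φ.toFun ((k / ((nk + n + 1 : ℕ) : ℝ)) * ∑ i ∈ Finset.range (nk + n + 1), |x i|) < ⊤)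
    {ε : ℝ} (hε : 0 < ε) :
    ∃ y ∈ cesOrlicz φ, {i : ℕ | y i ≠ 0}.Finite ∧ luxNorm φ (fun i => x i - y i) < ε := by
  set k := 2 / ε with hk_def
  have hk : 0 < k := by positivity
  obtain ⟨nk, h⟩ := hA k hk
  rw [tsum_congr (fun n => congrArg φ.toFun (aphi_term φ k x nk n))] at h
  set g : ℕ → ℝ≥0∞ := fun n => φ.toFun (k * cesaroMean x (nk + n)) with hg
  have htends := ENNReal.tendsto_sum_nat_add g h.ne
  obtain ⟨m, hm⟩ := (htends.eventually_lt_const (show (0:ℝ≥0∞) < 1 by norm_num)).exists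
  set M := nk + m with hM
  set y : ℕ → ℝ := fun i => if i < M + 1 then x i else 0 with hy
  have hyx : ∀ i, |y i| ≤ |x i| := by
    intro i; rw [hy]; dsimp only; split <;> simp [abs_nonneg]
  refine ⟨y, ?_, ?_, ?_⟩
  · obtain ⟨l, hl, H⟩ := hx
    exact ⟨l, hl, lt_of_le_of_lt (rho_mono φ (fun i => by
        simp only [abs_mul]; exact mul_le_mul_of_nonneg_left (hyx i) (abs_nonneg l))) H⟩
  · apply Set.Finite.subset (Set.finite_Iio (M + 1))
    intro i hi
    simp only [Set.mem_setOf_eq, hy] at hi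
    by_contra hcon
    simp only [Set.mem_Iio, not_lt] at hcon
    exact hi (if_neg (by omega))
  · set z : ℕ → ℝ := fun i => x i - y i with hz
    have hz0 : ∀ i, i < M + 1 → z i = 0 := by
      intro i hi; simp [hz, hy, if_pos hi, show i ≤ M by omega]
    have hzx : ∀ i, |z i| ≤ |x i| := by
      intro i
      by_cases hi : i < M + 1
      · rw [hz0 i hi]; simp [abs_nonneg]
      · have : z i = x i := by simp [hz, hy, if_neg hi, show ¬ i ≤ M by omega]
        rw [this]
    have hrhoz : rho φ (fun i => k * z i) ≤ 1 := by
      unfold rho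
      have hterm : ∀ n, φ.toFun (cesaroMean (fun i => k * z i) n)
          = φ.toFun (k * cesaroMean z n) := fun n => by rw [cesaroMean_smul hk.le]
      rw [tsum_congr hterm]
      rw [← Summable.sum_add_tsum_nat_add' (f := fun n => φ.toFun (k * cesaroMean z n)) (k := M + 1)
        ENNReal.summable]
      have hzero : ∑ i ∈ Finset.range (M + 1), φ.toFun (k * cesaroMean z i) = 0 := by
        apply Finset.sum_eq_zero
        intro i hi
        rw [Finset.mem_range] at hi
        have hces : cesaroMean z i = 0 := by
          unfold cesaroMean
          rw [Finset.sum_eq_zero, zero_div]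
          intro j hj
          rw [Finset.mem_range] at hj
          rw [hz0 j (by omega), abs_zero]
        rw [hces, mul_zero, φ.map_zero']
      rw [hzero, zero_add]
      have hle : ∑' n, φ.toFun (k * cesaroMean z (n + (M + 1)))
          ≤ ∑' n, (fun j => g (j + m)) (n + 1) := by
        apply ENNReal.tsum_le_tsum
        intro n
        have h1 : φ.toFun (k * cesaroMean z (n + (M + 1)))
            ≤ φ.toFun (k * cesaroMean x (n + (M + 1))) :=
          φ.mono_s6 (mul_nonneg hk.le (cesaroMean_nonneg _ _))
            (mul_le_mul_of_nonneg_left (cesaroMean_mono_abs hzx _) hk.le)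
        refine h1.trans (le_of_eq ?_)
        have hidx : n + (M + 1) = nk + (n + 1 + m) := by omega
        rw [hidx]
      refine hle.trans ?_
      refine (tsum_shift_le (fun j => g (j + m)) 1).trans ?_
      exact hm.le
    have hmem : (1/k : ℝ) ∈ {lam : ℝ | 0 < lam ∧ rho φ (fun i => z i / lam) ≤ 1} := by
      refine ⟨by positivity, ?_⟩
      have he : (fun i => z i / (1/k)) = fun i => k * z i := by
        funext i
        field_simp
      rw [he]
      exact hrhoz
    have hlb : luxNorm φ z ≤ 1/k := csInf_le ⟨0, fun b hb => hb.1.le⟩ hmem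
    have : (1/k : ℝ) = ε / 2 := by rw [hk_def]; field_simp
    calc luxNorm φ z ≤ 1/k := hlb
      _ < ε := by rw [this]; linarith

lemma tail_sum_lt_top (φ : OrliczFunction) {n₁ : ℕ}
    (hG : ∑' n : ℕ, φ.toFun (((n₁ + n + 1 : ℕ) : ℝ)⁻¹) < ⊤)
    (m N : ℕ) (hm1 : 1 ≤ m) :
    ∑' n : ℕ, φ.toFun ((m : ℝ) / ((m * (n₁ + 1) + N) + n + 1 : ℕ)) < ⊤ := by
  haveI : NeZero m := ⟨by omega⟩
  set nk := m * (n₁ + 1) + N with hnk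
  set F : ℕ → ℝ≥0∞ := fun n => φ.toFun ((m : ℝ) / ((nk + n + 1 : ℕ) : ℝ)) with hF
  have hre : ∑' n, F n = ∑' p : ℕ × Fin m, F (p.1 * m + (p.2 : ℕ)) := by
    rw [← Equiv.tsum_eq (Nat.divModEquiv m).symm F]
    rfl
  have hbound : ∀ (a : ℕ) (b : Fin m), F (a * m + (b : ℕ))
      ≤ φ.toFun (((n₁ + a + 1 : ℕ) : ℝ)⁻¹) := by
    intro a b
    apply φ.mono_s6 (by positivity)
    rw [inv_eq_one_div]
    rw [div_le_div_iff₀ (by positivity) (by positivity)]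
    have key : (m : ℝ) * ((n₁ + a + 1 : ℕ) : ℝ) ≤ 1 * ((nk + (a * m + (b:ℕ)) + 1 : ℕ) : ℝ) := by
      rw [one_mul]
      push_cast
      have hb : (b : ℕ) < m := b.is_lt
      rw [hnk]
      push_cast
      nlinarith [Nat.cast_nonneg (α := ℝ) N, Nat.cast_nonneg (α := ℝ) (b : ℕ),
        Nat.cast_nonneg (α := ℝ) a, Nat.cast_nonneg (α := ℝ) n₁]
    exact key
  calc ∑' n, F n = ∑' p : ℕ × Fin m, F (p.1 * m + (p.2 : ℕ)) := hre
    _ = ∑' (a : ℕ), ∑' (b : Fin m), F (a * m + (b : ℕ)) := ENNReal.tsum_prod'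
    _ ≤ ∑' (a : ℕ), ∑' (_ : Fin m), φ.toFun (((n₁ + a + 1 : ℕ) : ℝ)⁻¹) := by
        exact ENNReal.tsum_le_tsum fun a => ENNReal.tsum_le_tsum fun b => hbound a b
    _ = ∑' (a : ℕ), (m : ℝ≥0∞) * φ.toFun (((n₁ + a + 1 : ℕ) : ℝ)⁻¹) := by
        refine tsum_congr fun a => ?_
        rw [tsum_fintype]
        simp [Finset.sum_const, Finset.card_univ, mul_comm]
    _ = (m : ℝ≥0∞) * ∑' (a : ℕ), φ.toFun (((n₁ + a + 1 : ℕ) : ℝ)⁻¹) := ENNReal.tsum_mul_left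
    _ < ⊤ := ENNReal.mul_lt_top (ENNReal.natCast_lt_top m) hG

lemma superset_dir (φ : OrliczFunction) {n₁ : ℕ}
    (hG : ∑' n : ℕ, φ.toFun (((n₁ + n + 1 : ℕ) : ℝ)⁻¹) < ⊤)
    {x : ℕ → ℝ} (hx : x ∈ cesOrlicz φ)
    (hc : ∀ ε : ℝ, 0 < ε → ∃ y ∈ cesOrlicz φ,
      {i : ℕ | y i ≠ 0}.Finite ∧ luxNorm φ (fun i => x i - y i) < ε)
    {k : ℝ} (hk : 0 < k) :
    ∃ nk : ℕ, ∑' n : ℕ,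
      φ.toFun ((k / ((nk + n + 1 : ℕ) : ℝ)) * ∑ i ∈ Finset.range (nk + n + 1), |x i|) < ⊤ := by
  obtain ⟨y, hyces, hfin, hlux⟩ := hc (1 / (2 * k)) (by positivity)
  set z : ℕ → ℝ := fun i => x i - y i with hzdef
  have hzces : z ∈ cesOrlicz φ := cesOrlicz_sub φ hx hyces
  have hne := luxNorm_set_nonempty φ hzces
  unfold luxNorm at hlux
  obtain ⟨lam, ⟨hlam, hrho1⟩, hlamlt⟩ := exists_lt_of_csInf_lt hne hlux
  have h2k : 2 * k ≤ 1 / lam := by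
    rw [le_div_iff₀ hlam]
    rw [lt_div_iff₀ (by positivity)] at hlamlt
    linarith
  -- support bound for y
  obtain ⟨N₀, hN₀⟩ := hfin.bddAbove
  set N := N₀ + 1 with hN
  have hyN : ∀ i, N ≤ i → y i = 0 := by
    intro i hi
    by_contra hne'
    have := hN₀ (Set.mem_setOf_eq ▸ hne' : i ∈ {i : ℕ | y i ≠ 0})
    omega
  set C := ∑ i ∈ Finset.range N, |y i| with hC
  have hC0 : 0 ≤ C := Finset.sum_nonneg fun i _ => abs_nonneg _
  have hsum : ∀ n : ℕ, N ≤ n + 1 → ∑ i ∈ Finset.range (n + 1), |y i| = C := by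
    intro n hn
    rw [hC]
    symm
    apply Finset.sum_subset (Finset.range_subset_range.mpr hn)
    intro i hi hni
    rw [Finset.mem_range] at hi
    rw [Finset.mem_range, not_lt] at hni
    rw [hyN i hni, abs_zero]
  set m := ⌈2 * k * C⌉₊ + 1 with hmdef
  have hm1 : 1 ≤ m := by omega
  have hm2 : 2 * k * C ≤ (m : ℝ) := by
    refine (Nat.le_ceil _).trans ?_
    rw [hmdef]; push_cast; linarith
  set nk := m * (n₁ + 1) + N with hnk
  refine ⟨nk, ?_⟩
  rw [tsum_congr (fun n => congrArg φ.toFun (aphi_term φ k x nk n))]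
  -- termwise bound
  have hterm : ∀ n : ℕ, φ.toFun (k * cesaroMean x (nk + n))
      ≤ φ.toFun (cesaroMean (fun i => z i / lam) (nk + n))
        + φ.toFun ((m : ℝ) / ((nk + n + 1 : ℕ) : ℝ)) := by
    intro n
    set j := nk + n with hj
    have hNj : N ≤ j + 1 := by rw [hj, hnk]; omega
    have hcesy : cesaroMean y j = C / ((j : ℝ) + 1) := by
      unfold cesaroMean
      rw [hsum j hNj]
    have hxzy : cesaroMean x j ≤ cesaroMean z j + cesaroMean y j := by
      have : cesaroMean x j = cesaroMean (fun i => z i + y i) j := by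
        congr 1 with i
        simp [hzdef]
      rw [this]
      exact cesaroMean_add_le z y j
    have step1 : φ.toFun (k * cesaroMean x j)
        ≤ φ.toFun (k * cesaroMean z j + k * cesaroMean y j) := by
      apply φ.mono_s6 (mul_nonneg hk.le (cesaroMean_nonneg _ _))
      rw [← mul_add]
      exact mul_le_mul_of_nonneg_left hxzy hk.le
    have step2 : φ.toFun (k * cesaroMean z j + k * cesaroMean y j)
        ≤ φ.toFun (2 * (k * cesaroMean z j)) + φ.toFun (2 * (k * cesaroMean y j)) :=
      φ.add_le_s6 _ _
    have step3 : φ.toFun (2 * (k * cesaroMean z j))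
        ≤ φ.toFun (cesaroMean (fun i => z i / lam) j) := by
      rw [cesaroMean_div hlam]
      apply φ.mono_s6 (mul_nonneg two_pos.le (mul_nonneg hk.le (cesaroMean_nonneg _ _)))
      rw [div_eq_mul_inv, ← one_div]
      calc 2 * (k * cesaroMean z j) = (2 * k) * cesaroMean z j := by ring
        _ ≤ (1 / lam) * cesaroMean z j :=
            mul_le_mul_of_nonneg_right h2k (cesaroMean_nonneg _ _)
        _ = cesaroMean z j * (1 / lam) := mul_comm _ _
    have step4 : φ.toFun (2 * (k * cesaroMean y j))
        ≤ φ.toFun ((m : ℝ) / ((j + 1 : ℕ) : ℝ)) := by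
      apply φ.mono_s6 (mul_nonneg two_pos.le (mul_nonneg hk.le (cesaroMean_nonneg _ _)))
      rw [hcesy]
      have hjpos : (0:ℝ) < (j : ℝ) + 1 := by positivity
      have hcast : ((j + 1 : ℕ) : ℝ) = (j : ℝ) + 1 := by push_cast; ring
      rw [hcast]
      have heq : 2 * (k * (C / ((j:ℝ) + 1))) = (2 * k * C) / ((j:ℝ) + 1) := by ring
      rw [heq]
      gcongr
    calc φ.toFun (k * cesaroMean x j)
        ≤ φ.toFun (2 * (k * cesaroMean z j)) + φ.toFun (2 * (k * cesaroMean y j)) :=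
          step1.trans step2
      _ ≤ φ.toFun (cesaroMean (fun i => z i / lam) j)
          + φ.toFun ((m : ℝ) / ((j + 1 : ℕ) : ℝ)) := add_le_add step3 step4
      _ = _ := by rw [hj]
  calc ∑' n, φ.toFun (k * cesaroMean x (nk + n))
      ≤ ∑' n, (φ.toFun (cesaroMean (fun i => z i / lam) (nk + n))
          + φ.toFun ((m : ℝ) / ((nk + n + 1 : ℕ) : ℝ))) := ENNReal.tsum_le_tsum hterm
    _ = (∑' n, φ.toFun (cesaroMean (fun i => z i / lam) (nk + n)))
        + ∑' n, φ.toFun ((m : ℝ) / ((nk + n + 1 : ℕ) : ℝ)) := ENNReal.tsum_add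
    _ < ⊤ := by
        apply ENNReal.add_lt_top.mpr
        constructor
        · have h1 : ∑' n, φ.toFun (cesaroMean (fun i => z i / lam) (nk + n))
              = ∑' n, (fun j => φ.toFun (cesaroMean (fun i => z i / lam) j)) (n + nk) := by
            refine tsum_congr fun n => ?_
            simp only []
            rw [Nat.add_comm nk n]
          rw [h1]
          refine lt_of_le_of_lt ((tsum_shift_le _ nk).trans hrho1) ?_
          norm_num
        · have := tail_sum_lt_top φ hG m N hm1
          refine lt_of_le_of_lt (le_of_eq (tsum_congr fun n => ?_)) this
          rfl

/-- `A_φ` is the closure in `ces_φ` (for the Luxemburg norm)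
of the finitely supported sequences in `ces_φ`. -/
theorem stmt_6 (φ : OrliczFunction) (htail : TailFinite φ) :
    Aphi φ = {x | x ∈ cesOrlicz φ ∧ ∀ ε : ℝ, 0 < ε → ∃ y ∈ cesOrlicz φ,
      {i : ℕ | y i ≠ 0}.Finite ∧ luxNorm φ (fun i => x i - y i) < ε} := by
  obtain ⟨n₁, hG⟩ := htail
  ext x
  simp only [Aphi, Set.mem_setOf_eq]
  constructor
  · rintro ⟨hx, hA⟩
    exact ⟨hx, fun ε hε => subset_dir φ hx hA hε⟩
  · rintro ⟨hx, hc⟩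
    exact ⟨hx, fun k hk => superset_dir φ hG hx hc hk⟩
end
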